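/- Suppose f_1, ..., f_N : R^d → R are convex and β-smooth, f = (1/N)∑ f_i, and x⋆ is a minimizer of f. Then for all x: (1/N)∑_{i=1}^N ‖∇f_i(x)‖² ≤ (2/N)∑_{i=1}^N ‖∇f_i(x⋆)‖² + 4β(f(x) − f(x⋆)). -/

import Mathlib

open scoped RealInnerProductSpace


variable {E : Type*} [NormedAddCommGroup E] [InnerProductSpace ℝ E] [CompleteSpace E]

lemma descent_lemma {g : E → ℝ} {g' : E → E} {β : ℝ} (hβ : 0 < β)
    (hgrad : ∀ z, HasGradientAt g (g' z) z)
    (hsmooth : ∀ z w, ‖g' z - g' w‖ ≤ β * ‖z - w‖) (x v : E) :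
    g (x + v) ≤ g x + ⟪g' x, v⟫ + β / 2 * ‖v‖ ^ 2 := by
  set φ : ℝ → ℝ := fun t => g (x + t • v) - t * ⟪g' x, v⟫ - β / 2 * t ^ 2 * ‖v‖ ^ 2 with hφ
  have hd : ∀ t : ℝ, HasDerivAt φ (⟪g' (x + t • v), v⟫ - ⟪g' x, v⟫ - β * t * ‖v‖ ^ 2) t := by
    intro t
    have hc : HasDerivAt (fun t : ℝ => x + t • v) v t := by
      simpa using ((hasDerivAt_id t).smul_const v).const_add x
    have h1 : HasDerivAt (fun t : ℝ => g (x + t • v)) ⟪g' (x + t • v), v⟫ t := by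
      have := ((hgrad (x + t • v)).hasFDerivAt).comp_hasDerivAt t hc
      simp at this
      exact this
    have h2 : HasDerivAt (fun t : ℝ => t * ⟪g' x, v⟫) ⟪g' x, v⟫ t := by
      simpa using (hasDerivAt_id t).mul_const ⟪g' x, v⟫
    have h3 : HasDerivAt (fun t : ℝ => β / 2 * t ^ 2 * ‖v‖ ^ 2) (β * t * ‖v‖ ^ 2) t := by
      have : HasDerivAt (fun t : ℝ => t ^ 2) (2 * t) t := by
        simpa using hasDerivAt_pow 2 t
      have := (this.const_mul (β / 2)).mul_const (‖v‖ ^ 2)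
      convert this using 1 <;> first | rfl | ring
    have := (h1.sub h2).sub h3
    exact this
  have hmono : AntitoneOn φ (Set.Icc (0:ℝ) 1) := by
    apply antitoneOn_of_deriv_nonpos (convex_Icc 0 1)
    · exact fun t _ => ((hd t).differentiableAt.continuousAt.continuousWithinAt)
    · exact fun t _ => (hd t).differentiableAt.differentiableWithinAt
    · intro t ht
      rw [interior_Icc] at ht
      rw [(hd t).deriv]
      have h1 : ⟪g' (x + t • v) - g' x, v⟫ ≤ ‖g' (x + t • v) - g' x‖ * ‖v‖ :=
        real_inner_le_norm _ _
      have h2 : ‖g' (x + t • v) - g' x‖ ≤ β * (t * ‖v‖) := by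
        have := hsmooth (x + t • v) x
        simpa [norm_smul, abs_of_pos ht.1] using this
      have h3 : ‖g' (x + t • v) - g' x‖ * ‖v‖ ≤ β * (t * ‖v‖) * ‖v‖ :=
        mul_le_mul_of_nonneg_right h2 (norm_nonneg v)
      have := h1.trans h3
      rw [inner_sub_left] at this
      nlinarith [this]
  have := hmono (Set.left_mem_Icc.2 zero_le_one) (Set.right_mem_Icc.2 zero_le_one) zero_le_one
  simp only [hφ, zero_smul, one_smul, add_zero] at this
  nlinarith [this]

lemma bregman_lower {g : E → ℝ} {g' : E → E} {β : ℝ} (hβ : 0 < β)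
    (hgrad : ∀ z, HasGradientAt g (g' z) z)
    (hconvex : ∀ z w, g w ≥ g z + ⟪g' z, w - z⟫)
    (hsmooth : ∀ z w, ‖g' z - g' w‖ ≤ β * ‖z - w‖) (x y : E) :
    ‖g' x - g' y‖ ^ 2 ≤ 2 * β * (g x - g y - ⟪g' y, x - y⟫) := by
  set v : E := -((1/β) • (g' x - g' y)) with hv
  have h1 : g y + ⟪g' y, x + v - y⟫ ≤ g (x + v) := hconvex y (x + v)
  have h2 : g (x + v) ≤ g x + ⟪g' x, v⟫ + β / 2 * ‖v‖ ^ 2 := descent_lemma hβ hgrad hsmooth x v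
  have hnv : ‖v‖ ^ 2 = (1/β)^2 * ‖g' x - g' y‖ ^ 2 := by
    rw [hv, norm_neg, norm_smul]
    rw [Real.norm_eq_abs, abs_of_pos (by positivity)]
    ring
  have hxv : ⟪g' x, v⟫ = -(1/β) * ⟪g' x, g' x - g' y⟫ := by
    rw [hv, inner_neg_right, inner_smul_right]; ring
  have hyv : ⟪g' y, x + v - y⟫ = ⟪g' y, x - y⟫ - (1/β) * ⟪g' y, g' x - g' y⟫ := by
    have : x + v - y = (x - y) + v := by abel
    rw [this, inner_add_right, hv, inner_neg_right, inner_smul_right]; ring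
  have hsq : ⟪g' x, g' x - g' y⟫ - ⟪g' y, g' x - g' y⟫ = ‖g' x - g' y‖ ^ 2 := by
    rw [← inner_sub_left, real_inner_self_eq_norm_sq]
  have hβ' : β ≠ 0 := ne_of_gt hβ
  have key := h1.trans h2
  rw [hxv, hyv, hnv] at key
  have hAB : (1/β) * ⟪g' x, g' x - g' y⟫ - (1/β) * ⟪g' y, g' x - g' y⟫
      = (1/β) * ‖g' x - g' y‖ ^ 2 := by rw [← mul_sub, hsq]
  have : (1/β) * ‖g' x - g' y‖ ^ 2 - β/2 * ((1/β)^2 * ‖g' x - g' y‖^2)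
      ≤ g x - g y - ⟪g' y, x - y⟫ := by linarith [key, hAB]
  have e : (1/β) * ‖g' x - g' y‖ ^ 2 - β/2 * ((1/β)^2 * ‖g' x - g' y‖^2)
      = (1/(2*β)) * ‖g' x - g' y‖ ^ 2 := by field_simp; ring
  rw [e] at this
  calc ‖g' x - g' y‖ ^ 2 = 2 * β * ((1/(2*β)) * ‖g' x - g' y‖ ^ 2) := by field_simp
    _ ≤ 2 * β * (g x - g y - ⟪g' y, x - y⟫) := by
        exact mul_le_mul_of_nonneg_left this (by positivity)

/-- Convex smooth functions automatically satisfy bounded gradient dissimilarity with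
`B² = 2`: if `f_i` are convex and `β`-smooth, `f = (1/N)∑ f_i`, and `x⋆` minimizes `f`, then
`(1/N)∑ ‖∇f_i(x)‖² ≤ (2/N)∑ ‖∇f_i(x⋆)‖² + 4β (f(x) − f(x⋆))`. -/
theorem bgd_of_convex_smooth {d N : ℕ}
    (f : Fin N → EuclideanSpace ℝ (Fin d) → ℝ)
    (f' : Fin N → EuclideanSpace ℝ (Fin d) → EuclideanSpace ℝ (Fin d))
    (β : ℝ) (hβ : 0 < β)
    (hgrad : ∀ i x, HasGradientAt (f i) (f' i x) x)
    (hconvex : ∀ i x y, f i y ≥ f i x + ⟪f' i x, y - x⟫)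
    (hsmooth : ∀ i x y, ‖f' i x - f' i y‖ ≤ β * ‖x - y‖)
    (xstar : EuclideanSpace ℝ (Fin d))
    (hmin : ∀ y, (1 / (N : ℝ)) * ∑ i, f i xstar ≤ (1 / (N : ℝ)) * ∑ i, f i y)
    (x : EuclideanSpace ℝ (Fin d)) :
    (1 / (N : ℝ)) * ∑ i, ‖f' i x‖ ^ 2 ≤
      (2 / (N : ℝ)) * ∑ i, ‖f' i xstar‖ ^ 2 +
        4 * β * ((1 / (N : ℝ)) * ∑ i, f i x - (1 / (N : ℝ)) * ∑ i, f i xstar) := by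
  rcases Nat.eq_zero_or_pos N with hN | hN
  · subst hN; simp
  have hNpos : (0 : ℝ) < N := by exact_mod_cast hN
  -- the gradient of the average vanishes at the minimizer
  have hF : HasFDerivAt (fun y => ∑ i, f i y)
      (InnerProductSpace.toDual ℝ _ (∑ i, f' i xstar)) xstar := by
    have h := HasFDerivAt.fun_sum (u := Finset.univ)
      (fun i _ => (hgrad i xstar).hasFDerivAt)
    simpa [map_sum] using h
  have hloc : IsLocalMin (fun y => ∑ i, f i y) xstar := by
    apply Filter.Eventually.of_forall
    intro y
    have := hmin y
    exact le_of_mul_le_mul_left (by simpa [mul_comm] using this) (by positivity : (0:ℝ) < 1 / N)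
  have hzero : (∑ i, f' i xstar) = 0 := by
    have h0 := hloc.hasFDerivAt_eq_zero hF
    have := congrArg (fun L => (InnerProductSpace.toDual ℝ
      (EuclideanSpace ℝ (Fin d))).symm L) h0
    simpa using this
  have hsum0 : ∑ i, ⟪f' i xstar, x - xstar⟫ = 0 := by
    rw [← sum_inner, hzero, inner_zero_left]
  -- per-coordinate bound
  have hptwise : ∀ i, ‖f' i x‖ ^ 2 ≤ 2 * ‖f' i xstar‖ ^ 2
      + 4 * β * (f i x - f i xstar) - 4 * β * ⟪f' i xstar, x - xstar⟫ := by
    intro i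
    have hb := bregman_lower hβ (hgrad i) (fun z w => hconvex i z w) (hsmooth i) x xstar
    have htri : ‖f' i x‖ ≤ ‖f' i x - f' i xstar‖ + ‖f' i xstar‖ := by
      simpa using norm_add_le (f' i x - f' i xstar) (f' i xstar)
    have hsq2 : ‖f' i x‖ ^ 2 ≤ (‖f' i x - f' i xstar‖ + ‖f' i xstar‖) ^ 2 :=
      pow_le_pow_left₀ (norm_nonneg _) htri 2
    nlinarith [hb, hsq2, sq_nonneg (‖f' i x - f' i xstar‖ - ‖f' i xstar‖)]
  have hsum : ∑ i, ‖f' i x‖ ^ 2 ≤ 2 * ∑ i, ‖f' i xstar‖ ^ 2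
      + 4 * β * (∑ i, f i x - ∑ i, f i xstar) := by
    calc ∑ i, ‖f' i x‖ ^ 2
        ≤ ∑ i, (2 * ‖f' i xstar‖ ^ 2 + 4 * β * (f i x - f i xstar)
            - 4 * β * ⟪f' i xstar, x - xstar⟫) :=
          Finset.sum_le_sum fun i _ => hptwise i
      _ = 2 * ∑ i, ‖f' i xstar‖ ^ 2 + 4 * β * (∑ i, f i x - ∑ i, f i xstar)
            - 4 * β * ∑ i, ⟪f' i xstar, x - xstar⟫ := by
          rw [Finset.sum_sub_distrib, Finset.sum_add_distrib, ← Finset.mul_sum,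
            ← Finset.mul_sum, ← Finset.mul_sum, Finset.sum_sub_distrib]
      _ = 2 * ∑ i, ‖f' i xstar‖ ^ 2 + 4 * β * (∑ i, f i x - ∑ i, f i xstar) := by
          rw [hsum0]; ring
  have h1N : (0:ℝ) ≤ 1 / N := by positivity
  have := mul_le_mul_of_nonneg_left hsum h1N
  calc (1 / (N : ℝ)) * ∑ i, ‖f' i x‖ ^ 2
      ≤ (1 / (N : ℝ)) * (2 * ∑ i, ‖f' i xstar‖ ^ 2
          + 4 * β * (∑ i, f i x - ∑ i, f i xstar)) := this
    _ = (2 / (N : ℝ)) * ∑ i, ‖f' i xstar‖ ^ 2 +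
        4 * β * ((1 / (N : ℝ)) * ∑ i, f i x - (1 / (N : ℝ)) * ∑ i, f i xstar) := by
          ring
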